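/- Let β = (1+√5)/2, T_β(x) = βx mod 1, and let X be a random variable on [0,1) whose CDF F has no jumps at the endpoints of the intervals I_{n,J}, J ∈ Ω_n. Then for x ∈ [0, β^{−1}), the CDF F_n of T_β^n(X) satisfies F_n(x) = ∑_{J ∈ Ω_n} [F(L_{n,J} + x β^{−n}) − F(L_{n,J})]. -/
import Mathlib


open MeasureTheory Real Filter

/-- The golden ratio. -/
noncomputable def gr : ℝ := (1 + Real.sqrt 5) / 2

/-- Binary strings of length `n` with no two consecutive ones. -/
def Omega (n : ℕ) : Finset (Fin n → Fin 2) :=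
  Finset.univ.filter fun J =>
    ∀ k : Fin n, ∀ h : k.val + 1 < n, (J k : ℕ) * (J ⟨k.val + 1, h⟩ : ℕ) = 0

/-- `L (j_1,…,j_n) = ∑ j_k β^{-k}`. -/
noncomputable def L {n : ℕ} (J : Fin n → Fin 2) : ℝ :=
  ∑ k : Fin n, ((J k : ℕ) : ℝ) * gr ^ (-(k.val + 1 : ℤ))

/-- The last digit `j_n` of a string. -/
def lastD {n : ℕ} (J : Fin n → Fin 2) : ℕ :=
  if h : 0 < n then (J ⟨n - 1, Nat.sub_lt h one_pos⟩ : ℕ) else 0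

/-- The length of `I_{n,J}`. -/
noncomputable def Ilen {n : ℕ} (J : Fin n → Fin 2) : ℝ :=
  (lastD J : ℝ) * gr ^ (-(n + 1 : ℤ)) + (1 - (lastD J : ℝ)) * gr ^ (-(n : ℤ))

/-- The interval `I_{n,J}`. -/
noncomputable def Ival {n : ℕ} (J : Fin n → Fin 2) : Set ℝ :=
  Set.Ico (L J) (L J + Ilen J)

/-- The base-β transformation (β = golden ratio). -/
noncomputable def T (x : ℝ) : ℝ := gr * x - ⌊gr * x⌋

/-- The invariant density. -/
noncomputable def fGold (x : ℝ) : ℝ :=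
  if x < gr⁻¹ then (1 + gr) / Real.sqrt 5 else gr / Real.sqrt 5

/-- The pdf of `T^n X` when `X` has pdf `f`. -/
noncomputable def evolve (n : ℕ) (f : ℝ → ℝ) (x : ℝ) : ℝ :=
  if x < gr⁻¹ then ∑ J ∈ Omega n, gr ^ (-(n : ℤ)) * f (L J + x * gr ^ (-(n : ℤ)))
  else ∑ J ∈ (Omega n).filter (fun J => lastD J = 0),
    gr ^ (-(n : ℤ)) * f (L J + x * gr ^ (-(n : ℤ)))

lemma grr_pos : 0 < gr := by
  unfold gr; have := Real.sqrt_nonneg 5; linarith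

lemma one_lt_grr : 1 < gr := by
  unfold gr
  have h : (2:ℝ) < Real.sqrt 5 := by
    rw [show (2:ℝ) = Real.sqrt 4 by rw [show (4:ℝ) = 2^2 by norm_num, Real.sqrt_sq]; norm_num]
    exact Real.sqrt_lt_sqrt (by norm_num) (by norm_num)
  linarith

lemma grr_ne : gr ≠ 0 := ne_of_gt grr_pos

lemma grr_sq : gr ^ 2 = gr + 1 := by
  have h : Real.sqrt 5 ^ 2 = 5 := Real.sq_sqrt (by norm_num)
  unfold gr; field_simp; nlinarith [h]

lemma grr_split (m : ℤ) : gr ^ m = gr ^ (m - 1) + gr ^ (m - 2) := by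
  have h1 : gr ^ m = gr ^ (m - 2) * gr ^ (2:ℕ) := by
    rw [← zpow_natCast gr 2, ← zpow_add₀ grr_ne]; norm_num
  have h2 : gr ^ (m - 1) = gr ^ (m - 2) * gr := by
    rw [show m - 1 = (m-2)+1 by ring, zpow_add_one₀ grr_ne]
  rw [h1, grr_sq, h2]; ring

lemma grr_inv : gr⁻¹ = gr - 1 :=
  inv_eq_of_mul_eq_one_right (by nlinarith [grr_sq])




lemma mem_Omega {n : ℕ} {J : Fin n → Fin 2} :
    J ∈ Omega n ↔ ∀ k : Fin n, ∀ h : k.val + 1 < n, (J k : ℕ) * (J ⟨k.val + 1, h⟩ : ℕ) = 0 := by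
  simp [Omega]

lemma lastD_eq {n : ℕ} (hn : 0 < n) (J : Fin n → Fin 2) :
    lastD J = (J ⟨n - 1, Nat.sub_lt hn one_pos⟩ : ℕ) := by
  simp [lastD, hn]

lemma lastD_snoc {n : ℕ} (J : Fin n → Fin 2) (j : Fin 2) :
    lastD (Fin.snoc J j) = (j : ℕ) := by
  have h : Fin.snoc (α := fun _ => Fin 2) J j (Fin.last n) = j := Fin.snoc_last (α := fun _ => Fin 2) j J
  rw [lastD_eq (Nat.succ_pos n)]
  exact congrArg Fin.val h

lemma L_snoc {n : ℕ} (J : Fin n → Fin 2) (j : Fin 2) :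
    L (Fin.snoc J j) = L J + (j : ℕ) * gr ^ (-(n + 1 : ℤ)) := by
  unfold L
  rw [Fin.sum_univ_castSucc]
  simp [Fin.snoc_castSucc, Fin.snoc_last]

lemma snoc_mem_Omega {n : ℕ} {J : Fin n → Fin 2} (hJ : J ∈ Omega n) {j : Fin 2}
    (hj : (j : ℕ) = 0 ∨ lastD J = 0) : Fin.snoc J j ∈ Omega (n + 1) := by
  rw [mem_Omega] at hJ ⊢
  intro k h
  have hk : k.val < n := by omega
  rcases Nat.lt_or_ge (k.val + 1) n with h2 | h2
  · have e1 : k = Fin.castSucc ⟨k.val, hk⟩ := by ext; rfl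
    have e2 : (⟨k.val + 1, h⟩ : Fin (n+1)) = Fin.castSucc ⟨k.val + 1, h2⟩ := by ext; rfl
    have v1 : Fin.snoc (α := fun _ => Fin 2) J j k = J ⟨k.val, hk⟩ := Fin.snoc_castSucc (α := fun _ => Fin 2) j J ⟨k.val, hk⟩
    have v2 : Fin.snoc (α := fun _ => Fin 2) J j ⟨k.val + 1, h⟩ = J ⟨k.val + 1, h2⟩ := Fin.snoc_castSucc (α := fun _ => Fin 2) j J ⟨k.val + 1, h2⟩
    rw [v1, v2]
    exact hJ _ h2
  · have hkn : k.val + 1 = n := by omega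
    have e2 : (⟨k.val + 1, h⟩ : Fin (n+1)) = Fin.last n := by ext; simp [hkn]
    rw [e2, Fin.snoc_last]
    rcases hj with hj | hj
    · rw [hj]; ring
    · have e1 : k = Fin.castSucc ⟨k.val, hk⟩ := by ext; rfl
      rw [e1, Fin.snoc_castSucc]
      have hn : 0 < n := by omega
      rw [lastD_eq hn] at hj
      have : (⟨k.val, hk⟩ : Fin n) = ⟨n - 1, Nat.sub_lt hn one_pos⟩ := by ext; simp; omega
      rw [this, hj]; ring

lemma init_mem_Omega {n : ℕ} {J : Fin (n+1) → Fin 2} (hJ : J ∈ Omega (n + 1)) :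
    Fin.init J ∈ Omega n := by
  rw [mem_Omega] at hJ ⊢
  intro k h
  have h1 : (Fin.castSucc k).val + 1 < n + 1 := by simp only [Fin.coe_castSucc]; omega
  have := hJ (Fin.castSucc k) h1
  have e1 : Fin.init J k = J (Fin.castSucc k) := rfl
  have e2 : Fin.init J ⟨k.val + 1, h⟩ = J ⟨k.val + 1, by omega⟩ := rfl
  rw [e1, e2]
  exact this

lemma last_constraint {n : ℕ} {J : Fin (n+1) → Fin 2} (hJ : J ∈ Omega (n + 1))
    (h1 : (J (Fin.last n) : ℕ) = 1) : lastD (Fin.init J) = 0 := by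
  rcases Nat.eq_zero_or_pos n with rfl | hn
  · simp [lastD]
  · rw [mem_Omega] at hJ
    rw [lastD_eq hn]
    have hlt : (n - 1) + 1 < n + 1 := by omega
    have := hJ ⟨n - 1, by omega⟩ hlt
    have e2 : (⟨(n-1) + 1, hlt⟩ : Fin (n+1)) = Fin.last n := by ext; simp; omega
    rw [e2, h1] at this
    have e1 : Fin.init J ⟨n - 1, Nat.sub_lt hn one_pos⟩ = J ⟨n - 1, by omega⟩ := rfl
    rw [e1]; omega


lemma grr_zpow_pos (m : ℤ) : 0 < gr ^ m := zpow_pos grr_pos m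

lemma grr_lt_two : gr < 2 := by
  unfold gr
  have h : Real.sqrt 5 < 3 := by
    rw [show (3:ℝ) = Real.sqrt 9 by rw [show (9:ℝ) = 3^2 by norm_num, Real.sqrt_sq]; norm_num]
    exact Real.sqrt_lt_sqrt (by norm_num) (by norm_num)
  linarith

lemma lastD_le {n : ℕ} (J : Fin n → Fin 2) : lastD J ≤ 1 := by
  unfold lastD
  split
  · exact Fin.is_le _
  · norm_num

lemma Ilen_of_last_zero {n : ℕ} {J : Fin n → Fin 2} (h : lastD J = 0) :
    Ilen J = gr ^ (-(n:ℤ)) := by simp [Ilen, h]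

lemma Ilen_of_last_one {n : ℕ} {J : Fin n → Fin 2} (h : lastD J = 1) :
    Ilen J = gr ^ (-(n+1:ℤ)) := by simp [Ilen, h]

lemma Ilen_ge {n : ℕ} (J : Fin n → Fin 2) : gr ^ (-(n+1:ℤ)) ≤ Ilen J := by
  rcases Nat.le_one_iff_eq_zero_or_eq_one.mp (lastD_le J) with h' | h'
  · rw [Ilen_of_last_zero h']
    exact le_of_lt (zpow_lt_zpow_right₀ one_lt_grr (by omega))
  · rw [Ilen_of_last_one h']

lemma Ilen_le {n : ℕ} (J : Fin n → Fin 2) : Ilen J ≤ gr ^ (-(n:ℤ)) := by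
  rcases Nat.le_one_iff_eq_zero_or_eq_one.mp (lastD_le J) with h' | h'
  · rw [Ilen_of_last_zero h']
  · rw [Ilen_of_last_one h']
    exact le_of_lt (zpow_lt_zpow_right₀ one_lt_grr (by omega))

lemma T_low {u : ℝ} (h0 : 0 ≤ u) (h1 : u < gr⁻¹) : T u = gr * u := by
  unfold T
  have hf : ⌊gr * u⌋ = 0 := by
    rw [Int.floor_eq_zero_iff]
    constructor
    · exact mul_nonneg (le_of_lt grr_pos) h0
    · have := mul_lt_mul_of_pos_left h1 grr_pos
      rw [mul_inv_cancel₀ grr_ne] at this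
      simpa using this
  rw [hf]; simp

lemma T_high {u : ℝ} (h0 : gr⁻¹ ≤ u) (h1 : u < 1) : T u = gr * u - 1 := by
  unfold T
  have hf : ⌊gr * u⌋ = 1 := by
    have ha : 1 ≤ gr * u := by
      have := mul_le_mul_of_nonneg_left h0 (le_of_lt grr_pos)
      rwa [mul_inv_cancel₀ grr_ne] at this
    have hb : gr * u < 2 := by
      have := mul_lt_mul_of_pos_left h1 grr_pos
      rw [mul_one] at this
      linarith [grr_lt_two]
    rw [Int.floor_eq_iff]
    constructor
    · exact_mod_cast ha
    · push_cast; linarith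
  rw [hf]; norm_num

lemma T_iter_eq : ∀ {n : ℕ} {J : Fin n → Fin 2}, J ∈ Omega n → ∀ {y : ℝ},
    y ∈ Ival J → T^[n] y = gr ^ (n:ℤ) * (y - L J) := by
  intro n
  induction n with
  | zero =>
    intro J _ y _
    simp [L]
  | succ n ih =>
    intro J hJ y hy
    have hinit := init_mem_Omega hJ
    set J₀ := Fin.init J with hJ0
    set j := J (Fin.last n) with hjdef
    have hsn : Fin.snoc (α := fun _ => Fin 2) J₀ j = J := Fin.snoc_init_self J
    have hL : L J = L J₀ + (j:ℕ) * gr ^ (-(n+1:ℤ)) := by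
      rw [← hsn, L_snoc]
    have hlast : lastD J = (j : ℕ) := by rw [← hsn, lastD_snoc]
    have hzero : (0:ℝ) < gr ^ ((n:ℤ)) := grr_zpow_pos _
    have e1 : gr * gr ^ (n:ℤ) = gr ^ ((n:ℤ)+1) := by
      rw [zpow_add_one₀ grr_ne]; ring
    have e2 : gr ^ (n:ℤ) * gr ^ (-(n+1:ℤ)) = gr⁻¹ := by
      rw [← zpow_add₀ grr_ne, show (n:ℤ) + -(n+1) = -1 by ring, zpow_neg_one]
    have e3 : gr ^ (n:ℤ) * gr ^ (-(n:ℤ)) = 1 := by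
      rw [← zpow_add₀ grr_ne]; simp
    have e4 : gr ^ ((n:ℤ)+1) * gr ^ (-(n+1:ℤ)) = 1 := by
      rw [← zpow_add₀ grr_ne, show (n:ℤ)+1 + -(n+1) = 0 by ring, zpow_zero]
    have hiter : T^[n+1] y = T (T^[n] y) := Function.iterate_succ_apply' T n y
    have hcast : ((n+1 : ℕ) : ℤ) = (n:ℤ)+1 := by push_cast; ring
    have hy1 : L J ≤ y := hy.1
    have hy2 : y < L J + Ilen J := hy.2
    have hj01 : (j:ℕ) = 0 ∨ (j:ℕ) = 1 := by have := j.isLt; omega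
    rcases hj01 with h0 | h1
    · -- last digit 0
      have hLJ : L J = L J₀ := by rw [hL, h0]; push_cast; ring
      have hIlen : Ilen J = gr ^ (-((n:ℤ)+1)) := by
        rw [Ilen_of_last_zero (show lastD J = 0 by rw [hlast, h0])]
        congr 1
      rw [hLJ] at hy1
      rw [hLJ, hIlen] at hy2
      have hyI0 : y ∈ Ival J₀ := by
        simp only [Ival, Set.mem_Ico]
        exact ⟨hy1, lt_of_lt_of_le hy2 (by linarith [Ilen_ge J₀])⟩
      have hu := ih hinit hyI0
      have hlo : (0:ℝ) ≤ gr ^ (n:ℤ) * (y - L J₀) := mul_nonneg hzero.le (by linarith)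
      have hub : gr ^ (n:ℤ) * (y - L J₀) < gr⁻¹ := by
        have h := mul_lt_mul_of_pos_left (show y - L J₀ < gr ^ (-((n:ℤ)+1)) by linarith) hzero
        rw [e2] at h
        exact h
      rw [hiter, hu, T_low hlo hub, hcast, hLJ]
      linear_combination (y - L J₀) * e1
    · -- last digit 1
      have hlast1 : lastD J = 1 := by rw [hlast, h1]
      have hlast0 : lastD J₀ = 0 := last_constraint hJ (by rw [← hjdef, h1])
      have hIl0 : Ilen J₀ = gr ^ (-(n:ℤ)) := Ilen_of_last_zero hlast0
      have hIlen : Ilen J = gr ^ (-((n:ℤ)+2)) := by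
        rw [Ilen_of_last_one hlast1]
        congr 1
      have hLJ : L J = L J₀ + gr ^ (-((n:ℤ)+1)) := by rw [hL, h1]; push_cast; ring
      have hsplit : gr ^ (-(n:ℤ)) = gr ^ (-((n:ℤ)+1)) + gr ^ (-((n:ℤ)+2)) := by
        rw [grr_split (-(n:ℤ)), show -(n:ℤ)-1 = -((n:ℤ)+1) by ring,
          show -(n:ℤ)-2 = -((n:ℤ)+2) by ring]
      rw [hLJ] at hy1
      rw [hLJ, hIlen] at hy2
      have hyI0 : y ∈ Ival J₀ := by
        simp only [Ival, Set.mem_Ico]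
        constructor
        · linarith [grr_zpow_pos (-((n:ℤ)+1))]
        · rw [hIl0, hsplit]; linarith
      have hu := ih hinit hyI0
      have hlo : gr⁻¹ ≤ gr ^ (n:ℤ) * (y - L J₀) := by
        have h := mul_le_mul_of_nonneg_left
          (show gr ^ (-((n:ℤ)+1)) ≤ y - L J₀ by linarith) hzero.le
        rw [e2] at h
        exact h
      have hhi : gr ^ (n:ℤ) * (y - L J₀) < 1 := by
        have h := mul_lt_mul_of_pos_left
          (show y - L J₀ < gr ^ (-(n:ℤ)) by rw [hsplit]; linarith) hzero
        rw [e3] at h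
        exact h
      rw [hiter, hu, T_high hlo hhi, hcast, hLJ]
      linear_combination (y - L J₀) * e1 + e4

lemma fin2_cases (j : Fin 2) : j = 0 ∨ j = 1 := by
  rcases j with ⟨v, hv⟩
  interval_cases v
  · left; rfl
  · right; rfl

lemma grr_hsplit (n : ℕ) : gr ^ (-(n:ℤ)) = gr ^ (-((n:ℤ)+1)) + gr ^ (-((n:ℤ)+2)) := by
  rw [grr_split (-(n:ℤ)), show -(n:ℤ)-1 = -((n:ℤ)+1) by ring,
    show -(n:ℤ)-2 = -((n:ℤ)+2) by ring]

lemma Ival_snoc_zero {n : ℕ} (J₀ : Fin n → Fin 2) :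
    Ival (Fin.snoc J₀ 0) = Set.Ico (L J₀) (L J₀ + gr ^ (-((n:ℤ)+1))) := by
  unfold Ival
  rw [L_snoc, Ilen_of_last_zero (J := Fin.snoc J₀ 0) (by rw [lastD_snoc]; rfl)]
  norm_num

lemma Ival_snoc_one {n : ℕ} (J₀ : Fin n → Fin 2) :
    Ival (Fin.snoc J₀ 1) =
      Set.Ico (L J₀ + gr ^ (-((n:ℤ)+1))) (L J₀ + gr ^ (-((n:ℤ)+1)) + gr ^ (-((n:ℤ)+2))) := by
  unfold Ival
  rw [L_snoc, Ilen_of_last_one (J := Fin.snoc J₀ 1) (by rw [lastD_snoc]; rfl)]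
  norm_num
  ring_nf

lemma exists_cyl : ∀ (n : ℕ) (y : ℝ), y ∈ Set.Ico (0:ℝ) 1 → ∃ J ∈ Omega n, y ∈ Ival J := by
  intro n
  induction n with
  | zero =>
    intro y hy
    refine ⟨fun k => k.elim0, ?_, ?_⟩
    · rw [mem_Omega]; intro k; exact k.elim0
    · simp only [Ival, Set.mem_Ico, L, Ilen, lastD]
      simp
      constructor
      · simpa [L] using hy.1
      · simpa using hy.2
  | succ n ih =>
    intro y hy
    obtain ⟨J₀, hJ₀, hy₀⟩ := ih y hy
    by_cases hcase : y < L J₀ + gr ^ (-((n:ℤ)+1))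
    · refine ⟨Fin.snoc J₀ 0, snoc_mem_Omega hJ₀ (Or.inl rfl), ?_⟩
      rw [Ival_snoc_zero]
      exact ⟨hy₀.1, hcase⟩
    · have hl0 : lastD J₀ = 0 := by
        rcases Nat.le_one_iff_eq_zero_or_eq_one.mp (lastD_le J₀) with h | h
        · exact h
        · exfalso; apply hcase
          have h2 := hy₀.2
          rw [Ilen_of_last_one h] at h2
          exact h2
      refine ⟨Fin.snoc J₀ 1, snoc_mem_Omega hJ₀ (Or.inr hl0), ?_⟩
      rw [Ival_snoc_one]
      refine ⟨not_lt.mp hcase, ?_⟩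
      have h2 := hy₀.2
      rw [Ilen_of_last_zero hl0, grr_hsplit n] at h2
      linarith

lemma Ival_snoc_subset {n : ℕ} {J₀ : Fin n → Fin 2} {j : Fin 2}
    (h : j = 1 → lastD J₀ = 0) : Ival (Fin.snoc J₀ j) ⊆ Ival J₀ := by
  rcases fin2_cases j with rfl | rfl
  · rw [Ival_snoc_zero]
    unfold Ival
    exact Set.Ico_subset_Ico le_rfl (by linarith [Ilen_ge J₀])
  · rw [Ival_snoc_one]
    unfold Ival
    refine Set.Ico_subset_Ico (by linarith [grr_zpow_pos (-((n:ℤ)+1))]) ?_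
    rw [Ilen_of_last_zero (h rfl), grr_hsplit n]
    linarith

lemma Ival_pairwise : ∀ {n : ℕ} {J J' : Fin n → Fin 2}, J ∈ Omega n → J' ∈ Omega n →
    J ≠ J' → ∀ y : ℝ, y ∈ Ival J → y ∈ Ival J' → False := by
  intro n
  induction n with
  | zero =>
    intro J J' _ _ hne y _ _
    exact hne (funext fun k => k.elim0)
  | succ n ih =>
    intro J J' hJ hJ' hne y hy hy'
    have hsn : Fin.snoc (α := fun _ => Fin 2) (Fin.init J) (J (Fin.last n)) = J :=
      Fin.snoc_init_self J
    have hsn' : Fin.snoc (α := fun _ => Fin 2) (Fin.init J') (J' (Fin.last n)) = J' :=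
      Fin.snoc_init_self J'
    by_cases hI : Fin.init J = Fin.init J'
    · have hne2 : J (Fin.last n) ≠ J' (Fin.last n) := by
        intro h; apply hne; rw [← hsn, ← hsn', hI, h]
      have key : ∀ (K : Fin n → Fin 2), y ∈ Ival (Fin.snoc K 0) → y ∈ Ival (Fin.snoc K 1) → False := by
        intro K h0 h1
        rw [Ival_snoc_zero] at h0
        rw [Ival_snoc_one] at h1
        exact absurd h0.2 (not_lt.mpr h1.1)
      rcases fin2_cases (J (Fin.last n)) with hj | hj <;>
        rcases fin2_cases (J' (Fin.last n)) with hj' | hj'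
      · exact hne2 (hj.trans hj'.symm)
      · rw [← hsn] at hy; rw [← hsn', ← hI] at hy'
        rw [hj] at hy; rw [hj'] at hy'
        exact key _ hy hy'
      · rw [← hsn] at hy; rw [← hsn', ← hI] at hy'
        rw [hj] at hy; rw [hj'] at hy'
        exact key _ hy' hy
      · exact hne2 (hj.trans hj'.symm)
    · refine ih (init_mem_Omega hJ) (init_mem_Omega hJ') hI y ?_ ?_
      · refine Ival_snoc_subset (fun h => last_constraint hJ ?_) (hsn ▸ hy)
        rw [h]; rfl
      · refine Ival_snoc_subset (fun h => last_constraint hJ' ?_) (hsn' ▸ hy')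
        rw [h]; rfl

lemma measure_lt_eq_le {Ω : Type*} [MeasureSpace Ω] (X : Ω → ℝ) {a : ℝ}
    (hnull : volume {ω | X ω = a} = 0) :
    volume {ω | X ω < a} = volume {ω | X ω ≤ a} := by
  apply le_antisymm
  · exact measure_mono (Set.setOf_subset_setOf.mpr (fun ω h => le_of_lt h))
  · have h1 : volume {ω | X ω ≤ a} ≤ volume ({ω | X ω < a} ∪ {ω | X ω = a}) := by
      apply measure_mono
      intro ω h
      have hh : X ω ≤ a := h
      rcases lt_or_eq_of_le hh with h' | h'
      · exact Or.inl h'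
      · exact Or.inr h'
    have h2 := measure_union_le (μ := (volume : Measure Ω)) {ω | X ω < a} {ω | X ω = a}
    rw [hnull, add_zero] at h2
    exact h1.trans h2

lemma per_term {Ω : Type*} [MeasureSpace Ω] [IsFiniteMeasure (volume : Measure Ω)]
    (X : Ω → ℝ) (hX : Measurable X) {a b : ℝ} (hab : a ≤ b)
    (hnull : volume {ω | X ω = a} = 0) :
    (volume (X ⁻¹' Set.Icc a b)).toReal
      = (volume {ω | X ω ≤ b}).toReal - (volume {ω | X ω ≤ a}).toReal := by
  have hmBs : MeasurableSet (X ⁻¹' Set.Iio a) := hX measurableSet_Iio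
  have hsub : X ⁻¹' Set.Iio a ⊆ X ⁻¹' Set.Iic b := fun ω h => le_trans (le_of_lt h) hab
  have hdiff : X ⁻¹' Set.Icc a b = X ⁻¹' Set.Iic b \ X ⁻¹' Set.Iio a := by
    ext ω
    simp only [Set.mem_preimage, Set.mem_Icc, Set.mem_diff, Set.mem_Iic, Set.mem_Iio, not_lt]
    exact and_comm
  have e1 : X ⁻¹' Set.Iic b = {ω | X ω ≤ b} := rfl
  have e2 : X ⁻¹' Set.Iio a = {ω | X ω < a} := rfl
  rw [hdiff, measure_diff hsub hmBs.nullMeasurableSet (measure_ne_top _ _), e1, e2,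
    measure_lt_eq_le X hnull]
  exact ENNReal.toReal_sub_of_le
    (measure_mono (Set.setOf_subset_setOf.mpr (fun ω h => le_trans h hab)))
    (measure_ne_top _ _)

theorem cdf_remainder_low {Ω : Type*} [MeasureSpace Ω]
    [IsProbabilityMeasure (volume : Measure Ω)]
    (X : Ω → ℝ) (hX : Measurable X) (hX01 : ∀ ω, X ω ∈ Set.Ico (0 : ℝ) 1)
    (n : ℕ) (hn : 0 < n)
    (hnojump : ∀ J ∈ Omega n, volume {ω | X ω = L J} = 0 ∧
      volume {ω | X ω = L J + Ilen J} = 0) :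
    ∀ x ∈ Set.Ico (0 : ℝ) gr⁻¹,
      (volume {ω | T^[n] (X ω) ≤ x}).toReal =
        ∑ J ∈ Omega n,
          ((volume {ω | X ω ≤ L J + x * gr ^ (-(n : ℤ))}).toReal
            - (volume {ω | X ω ≤ L J}).toReal) := by
  intro x hx
  have hp := grr_zpow_pos (-(n:ℤ))
  have hpn := grr_zpow_pos (n:ℤ)
  have einv : gr ^ (n:ℤ) * gr ^ (-(n:ℤ)) = 1 := by rw [← zpow_add₀ grr_ne]; simp
  have hc0 : 0 ≤ x * gr ^ (-(n:ℤ)) := mul_nonneg hx.1 hp.le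
  have hcb : x * gr ^ (-(n:ℤ)) < gr ^ (-((n:ℤ)+1)) := by
    have h := mul_lt_mul_of_pos_right hx.2 hp
    have e : gr⁻¹ * gr ^ (-(n:ℤ)) = gr ^ (-((n:ℤ)+1)) := by
      rw [← zpow_neg_one, ← zpow_add₀ grr_ne]; congr 1; ring
    rw [e] at h; exact h
  have hIcc : ∀ J : Fin n → Fin 2,
      Set.Icc (L J) (L J + x * gr ^ (-(n:ℤ))) ⊆ Ival J := by
    intro J t ht
    simp only [Ival, Set.mem_Ico]
    exact ⟨ht.1, lt_of_le_of_lt ht.2 (by linarith [Ilen_ge J, hcb])⟩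
  have hkey : {ω | T^[n] (X ω) ≤ x} =
      ⋃ J ∈ Omega n, X ⁻¹' Set.Icc (L J) (L J + x * gr ^ (-(n:ℤ))) := by
    ext ω
    simp only [Set.mem_setOf_eq, Set.mem_iUnion, Set.mem_preimage, Set.mem_Icc, exists_prop]
    constructor
    · intro h
      obtain ⟨J, hJ, hyJ⟩ := exists_cyl n (X ω) (hX01 ω)
      refine ⟨J, hJ, hyJ.1, ?_⟩
      have ht := T_iter_eq hJ hyJ
      rw [ht] at h
      have h2 := mul_le_mul_of_nonneg_left h hp.le
      have keyeq : X ω - L J = gr ^ (-(n:ℤ)) * (gr ^ (n:ℤ) * (X ω - L J)) := by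
        rw [← mul_assoc, mul_comm (gr ^ (-(n:ℤ))) (gr ^ (n:ℤ)), einv, one_mul]
      linarith [h2, keyeq]
    · rintro ⟨J, hJ, h1, h2⟩
      have hIv : X ω ∈ Ival J := hIcc J ⟨h1, h2⟩
      rw [T_iter_eq hJ hIv]
      have h3 := mul_le_mul_of_nonneg_left
        (show X ω - L J ≤ x * gr ^ (-(n:ℤ)) by linarith) hpn.le
      have keyeq : gr ^ (n:ℤ) * (x * gr ^ (-(n:ℤ))) = x := by
        rw [mul_comm x, ← mul_assoc, einv, one_mul]
      linarith [h3, keyeq]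
  have hdisj : (↑(Omega n) : Set (Fin n → Fin 2)).PairwiseDisjoint
      (fun J => X ⁻¹' Set.Icc (L J) (L J + x * gr ^ (-(n:ℤ)))) := by
    intro J hJ J' hJ' hne
    rw [Function.onFun, Set.disjoint_left]
    intro ω h h'
    exact Ival_pairwise (Finset.mem_coe.mp hJ) (Finset.mem_coe.mp hJ') hne (X ω)
      (hIcc J h) (hIcc J' h')
  have hmeas : ∀ J ∈ Omega n,
      MeasurableSet (X ⁻¹' Set.Icc (L J) (L J + x * gr ^ (-(n:ℤ)))) :=
    fun J _ => hX measurableSet_Icc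
  rw [hkey, measure_biUnion_finset hdisj hmeas,
    ENNReal.toReal_sum (fun J _ => measure_ne_top _ _)]
  apply Finset.sum_congr rfl
  intro J hJ
  exact per_term X hX (by linarith) (hnojump J hJ).1
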